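/- Let q ≥ 1, γ ∈ ℝ, γ ≠ 0, and let u : (0,∞) → ℝ be measurable with ∫_0^∞ |u(x)|^q x^{γ−1} dx < ∞. Then for every y > 0 with y ≠ 1, ∫_0^∞ |u(x) − u(xy)|^q x^{γ−1} dx ≥ |1 − y^{−γ/q}|^q ∫_0^∞ |u(x)|^q x^{γ−1} dx. -/

import Mathlib

open MeasureTheory Set
open scoped ENNReal

noncomputable section

lemma scale_Ioi (g : ℝ → ℝ≥0∞) (hg : Measurable g) {y : ℝ} (hy : 0 < y) :
    ∫⁻ x in Ioi (0:ℝ), g (x * y) = ENNReal.ofReal y⁻¹ * ∫⁻ x in Ioi (0:ℝ), g x := by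
  have hmeas : Measurable ((Ioi (0:ℝ)).indicator g) := hg.indicator measurableSet_Ioi
  calc ∫⁻ x in Ioi (0:ℝ), g (x * y)
      = ∫⁻ x, (Ioi (0:ℝ)).indicator (fun x => g (x * y)) x := by
        rw [← lintegral_indicator measurableSet_Ioi _]
    _ = ∫⁻ x, (Ioi (0:ℝ)).indicator g (x * y) := by
        refine lintegral_congr fun x => ?_
        by_cases hx : x ∈ Ioi (0:ℝ)
        · rw [indicator_of_mem hx, indicator_of_mem (by exact mul_pos hx hy)]
        · rw [indicator_of_notMem hx, indicator_of_notMem]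
          simp only [mem_Ioi, not_lt] at hx ⊢
          exact mul_nonpos_iff.mpr (Or.inr ⟨hx, hy.le⟩)
    _ = ∫⁻ z, (Ioi (0:ℝ)).indicator g z ∂(Measure.map (· * y) volume) := by
        rw [lintegral_map hmeas (measurable_mul_const y)]
    _ = ENNReal.ofReal y⁻¹ * ∫⁻ x in Ioi (0:ℝ), g x := by
        rw [Real.map_volume_mul_right (ne_of_gt hy), lintegral_smul_measure,
          abs_of_pos (inv_pos.mpr hy), ← lintegral_indicator measurableSet_Ioi _, smul_eq_mul]

lemma key_scaling (q γ : ℝ) (u : ℝ → ℝ) (hu : Measurable u) {y : ℝ} (hy : 0 < y) :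
    ∫⁻ x in Ioi (0:ℝ), ENNReal.ofReal (|u (x * y)| ^ q * x ^ (γ - 1))
      = ENNReal.ofReal (y ^ (-γ)) *
        ∫⁻ x in Ioi (0:ℝ), ENNReal.ofReal (|u x| ^ q * x ^ (γ - 1)) := by
  set g : ℝ → ℝ≥0∞ := fun x => ENNReal.ofReal (|u x| ^ q * x ^ (γ - 1)) with hg_def
  have hg : Measurable g := by fun_prop
  have step1 : ∫⁻ x in Ioi (0:ℝ), ENNReal.ofReal (|u (x * y)| ^ q * x ^ (γ - 1))
      = ENNReal.ofReal (y ^ (1 - γ)) * ∫⁻ x in Ioi (0:ℝ), g (x * y) := by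
    rw [← lintegral_const_mul _ (show Measurable fun x : ℝ => g (x*y) from hg.comp (measurable_mul_const y))]
    refine setLIntegral_congr_fun measurableSet_Ioi ?_
    intro x hx
    have hx0 : (0:ℝ) < x := hx
    simp only [hg_def]
    rw [← ENNReal.ofReal_mul (Real.rpow_nonneg hy.le _)]
    congr 1
    have h1 : y ^ (1 - γ) * y ^ (γ - 1) = 1 := by
      rw [← Real.rpow_add hy]; norm_num
    rw [Real.mul_rpow hx0.le hy.le,
      show y ^ (1 - γ) * (|u (x * y)| ^ q * (x ^ (γ - 1) * y ^ (γ - 1)))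
        = |u (x * y)| ^ q * x ^ (γ - 1) * (y ^ (1 - γ) * y ^ (γ - 1)) from by ring,
      h1, mul_one]
  rw [step1, scale_Ioi g hg hy, ← mul_assoc, ← ENNReal.ofReal_mul (Real.rpow_nonneg hy.le _)]
  congr 2
  rw [← Real.rpow_neg_one y, ← Real.rpow_add hy]
  ring_nf

theorem one_dimensional_key_estimate (q γ : ℝ) (hq : 1 ≤ q) (hγ : γ ≠ 0)
    (u : ℝ → ℝ) (hu : Measurable u)
    (hfin : (∫⁻ x in Ioi (0 : ℝ), ENNReal.ofReal (|u x| ^ q * x ^ (γ - 1))) < ⊤)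
    (y : ℝ) (hy : 0 < y) (hy1 : y ≠ 1) :
    (∫⁻ x in Ioi (0 : ℝ), ENNReal.ofReal (|u x - u (x * y)| ^ q * x ^ (γ - 1)))
      ≥ ENNReal.ofReal (|1 - y ^ (-γ / q)| ^ q) *
        ∫⁻ x in Ioi (0 : ℝ), ENNReal.ofReal (|u x| ^ q * x ^ (γ - 1)) := by
  have hq0 : (0:ℝ) < q := lt_of_lt_of_le zero_lt_one hq
  set w : ℝ → ℝ≥0∞ := fun x => ENNReal.ofReal (x ^ ((γ - 1)/q)) with hw_def
  have hw : Measurable w := by fun_prop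
  -- weighted reformulation
  have weight_form : ∀ v : ℝ → ℝ,
      ∫⁻ x in Ioi (0:ℝ), ENNReal.ofReal (|v x| ^ q * x ^ (γ - 1))
        = ∫⁻ x in Ioi (0:ℝ), (w x * ENNReal.ofReal |v x|) ^ q := by
    intro v
    refine setLIntegral_congr_fun measurableSet_Ioi ?_
    intro x hx
    beta_reduce
    have hx0 : (0:ℝ) < x := hx
    have h1 : (x ^ ((γ - 1)/q)) ^ q = x ^ (γ - 1) := by
      rw [← Real.rpow_mul hx0.le, div_mul_cancel₀ _ (ne_of_gt hq0)]
    rw [hw_def, ← ENNReal.ofReal_mul (Real.rpow_nonneg hx0.le _),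
      ENNReal.ofReal_rpow_of_nonneg (mul_nonneg (Real.rpow_nonneg hx0.le _) (abs_nonneg _)) hq0.le,
      Real.mul_rpow (Real.rpow_nonneg hx0.le _) (abs_nonneg _), h1, mul_comm]
  set F : ℝ → ℝ≥0∞ := fun x => w x * ENNReal.ofReal |u x| with hF_def
  set G : ℝ → ℝ≥0∞ := fun x => w x * ENNReal.ofReal |u (x * y)| with hG_def
  set D : ℝ → ℝ≥0∞ := fun x => w x * ENNReal.ofReal |u x - u (x * y)| with hD_def
  have hF : Measurable F := by fun_prop
  have hG : Measurable G := by fun_prop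
  have hD : Measurable D := by fun_prop
  set I := ∫⁻ x in Ioi (0:ℝ), ENNReal.ofReal (|u x| ^ q * x ^ (γ - 1)) with hI_def
  set J := ∫⁻ x in Ioi (0:ℝ), ENNReal.ofReal (|u x - u (x * y)| ^ q * x ^ (γ - 1)) with hJ_def
  have hIF : I = ∫⁻ x in Ioi (0:ℝ), F x ^ q := weight_form u
  have hJD : J = ∫⁻ x in Ioi (0:ℝ), D x ^ q := weight_form _
  have hKG : ∫⁻ x in Ioi (0:ℝ), G x ^ q = ENNReal.ofReal (y ^ (-γ)) * I :=
    (weight_form (fun x => u (x * y))).symm.trans (key_scaling q γ u hu hy)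
  set a := I ^ (1/q) with ha_def
  set d := J ^ (1/q) with hd_def
  set c := ENNReal.ofReal (y ^ (-γ / q)) with hc_def
  have haf : a ≠ ⊤ := (ENNReal.rpow_lt_top_of_nonneg (by positivity) hfin.ne).ne
  have hk : (∫⁻ x in Ioi (0:ℝ), G x ^ q) ^ (1/q) = c * a := by
    rw [hKG, ENNReal.mul_rpow_of_nonneg _ _ (by positivity : (0:ℝ) ≤ 1/q)]
    congr 1
    rw [ENNReal.ofReal_rpow_of_pos (Real.rpow_pos_of_pos hy _)]
    congr 1
    rw [← Real.rpow_mul hy.le, mul_one_div]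
  -- pointwise triangle inequalities
  have ptF : ∀ x, F x ≤ D x + G x := by
    intro x
    rw [hF_def, hD_def, hG_def]
    simp only
    rw [← mul_add]
    refine mul_le_mul_right ?_ _
    rw [← ENNReal.ofReal_add (abs_nonneg _) (abs_nonneg _)]
    exact ENNReal.ofReal_le_ofReal (by simpa using abs_add_le (u x - u (x * y)) (u (x * y)))
  have ptG : ∀ x, G x ≤ D x + F x := by
    intro x
    rw [hF_def, hD_def, hG_def]
    simp only
    rw [← mul_add]
    refine mul_le_mul_right ?_ _
    rw [← ENNReal.ofReal_add (abs_nonneg _) (abs_nonneg _)]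
    refine ENNReal.ofReal_le_ofReal ?_
    have := abs_add_le (u x - u (x * y)) (u x)
    calc |u (x * y)| = |-(u x - u (x * y)) + u x| := by ring_nf
      _ ≤ |-(u x - u (x * y))| + |u x| := abs_add_le _ _
      _ = |u x - u (x * y)| + |u x| := by rw [abs_neg]
  -- Minkowski
  have tri1 : a ≤ d + c * a := by
    rw [ha_def, hd_def, ← hk, hIF, hJD]
    calc (∫⁻ x in Ioi (0:ℝ), F x ^ q) ^ (1/q)
        ≤ (∫⁻ x in Ioi (0:ℝ), (D + G) x ^ q) ^ (1/q) := by
          refine ENNReal.rpow_le_rpow (lintegral_mono fun x => ?_) (by positivity)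
          exact ENNReal.rpow_le_rpow (ptF x) hq0.le
      _ ≤ (∫⁻ x in Ioi (0:ℝ), D x ^ q) ^ (1/q) + (∫⁻ x in Ioi (0:ℝ), G x ^ q) ^ (1/q) :=
          ENNReal.lintegral_Lp_add_le hD.aemeasurable hG.aemeasurable hq
  have tri2 : c * a ≤ d + a := by
    rw [ha_def, hd_def, ← hk, hIF, hJD]
    calc (∫⁻ x in Ioi (0:ℝ), G x ^ q) ^ (1/q)
        ≤ (∫⁻ x in Ioi (0:ℝ), (D + F) x ^ q) ^ (1/q) := by
          refine ENNReal.rpow_le_rpow (lintegral_mono fun x => ?_) (by positivity)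
          exact ENNReal.rpow_le_rpow (ptG x) hq0.le
      _ ≤ (∫⁻ x in Ioi (0:ℝ), D x ^ q) ^ (1/q) + (∫⁻ x in Ioi (0:ℝ), F x ^ q) ^ (1/q) :=
          ENNReal.lintegral_Lp_add_le hD.aemeasurable hF.aemeasurable hq
  -- conclude
  have hc' : (0:ℝ) ≤ y ^ (-γ / q) := Real.rpow_nonneg hy.le _
  have key : ENNReal.ofReal |1 - y ^ (-γ / q)| * a ≤ d := by
    rcases le_total (y ^ (-γ / q)) 1 with hcle | hcge
    · rw [abs_of_nonneg (by linarith : (0:ℝ) ≤ 1 - y ^ (-γ / q)),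
        ENNReal.ofReal_sub _ hc', ENNReal.ofReal_one,
        ENNReal.sub_mul (fun _ _ => haf), one_mul]
      exact tsub_le_iff_right.mpr tri1
    · rw [abs_of_nonpos (by linarith), neg_sub,
        ENNReal.ofReal_sub _ zero_le_one, ENNReal.ofReal_one,
        ENNReal.sub_mul (fun _ _ => haf), one_mul]
      exact tsub_le_iff_right.mpr tri2
  have hJ' : J = d ^ q := by
    rw [hd_def, ← ENNReal.rpow_mul, one_div_mul_cancel (ne_of_gt hq0), ENNReal.rpow_one]
  have hI' : I = a ^ q := by
    rw [ha_def, ← ENNReal.rpow_mul, one_div_mul_cancel (ne_of_gt hq0), ENNReal.rpow_one]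
  calc ENNReal.ofReal (|1 - y ^ (-γ / q)| ^ q) * I
      = (ENNReal.ofReal |1 - y ^ (-γ / q)| * a) ^ q := by
        rw [hI', ← ENNReal.ofReal_rpow_of_nonneg (abs_nonneg _) hq0.le,
          ENNReal.mul_rpow_of_nonneg _ _ hq0.le]
    _ ≤ d ^ q := ENNReal.rpow_le_rpow key hq0.le
    _ = J := hJ'.symm
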